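/- Let 𝓑 be a bounding class with ℒ ⪯ 𝓑, G a finitely generated group with word-length function L, and 𝓗 = {H_α}_{α∈Λ} a finite family of subgroups such that Δ = ker(⊕_{α∈Λ} ℤ[G/H_α] → ℤ) admits a type FF^∞ resolution over ℤ[G]. If some type FF^∞ resolution of Δ over ℤ[G] admits a ℤ-linear contraction {s_n : R_n → R_{n+1}}_{n ≥ −1} with each s_n bounded by an element of 𝓑 (with respect to the weights described below), then every type FF^∞ resolution of Δ over ℤ[G] admits such a 𝓑-bounded contraction. -/

import Mathlib

open scoped BigOperators

/-- A bounding class: a set of non-decreasing positive functions on `[0,∞)`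
containing the constant function `1`, weakly closed under non-negative rational
linear combinations and under right composition with affine functions with
non-negative rational coefficients. -/
structure BoundingClass where
  carrier : Set (ℝ → ℝ)
  mono : ∀ f ∈ carrier, ∀ x y : ℝ, 0 ≤ x → x ≤ y → f x ≤ f y
  pos : ∀ f ∈ carrier, ∀ x : ℝ, 0 ≤ x → 0 < f x
  one_mem : (fun _ => (1 : ℝ)) ∈ carrier
  lin_comb : ∀ (n : ℕ) (f : Fin n → (ℝ → ℝ)) (q : Fin n → ℚ),
    (∀ i, f i ∈ carrier) → (∀ i, 0 ≤ q i) →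
    ∃ g ∈ carrier, ∀ x : ℝ, 0 ≤ x → ∑ i, (q i : ℝ) * f i x < g x
  comp_lin : ∀ f ∈ carrier, ∀ a b : ℚ, 0 ≤ a → 0 ≤ b →
    ∃ h ∈ carrier, ∀ x : ℝ, 0 ≤ x → f ((a : ℝ) * x + (b : ℝ)) < h x

/-- The linear bounding class `ℒ = {x ↦ a x + b | a, b ∈ ℚ≥0}`. -/
def LinClass : Set (ℝ → ℝ) :=
  {f | ∃ a b : ℚ, 0 ≤ a ∧ 0 ≤ b ∧ f = fun x => (a : ℝ) * x + (b : ℝ)}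

/-- `𝓑' ⪯ 𝓑`: every element of `𝓑'` is bounded above (on `[0,∞)`) by an element
of `𝓑`. -/
def ClassLE (B' B : Set (ℝ → ℝ)) : Prop :=
  ∀ f ∈ B', ∃ g ∈ B, ∀ x : ℝ, 0 ≤ x → f x ≤ g x

/-- The weighted `ℓ¹`-norm `‖x‖_w = Σ |m_i| · w (s_i)` of an integral chain. -/
noncomputable def wnorm {S : Type*} (w : S → ℝ) (x : S →₀ ℤ) : ℝ :=
  x.sum fun s m => |(m : ℝ)| * w s

variable (G : Type) [Group G]

/-- The `G`-set `⊔_α G/H_α` underlying `⊕_α ℤ[G/H_α]`. -/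
abbrev cosetUnion {Λ : Type} (H : Λ → Subgroup G) : Type := Σ α : Λ, G ⧸ H α

/-- The augmentation `⊕_α ℤ[G/H_α] → ℤ`, sending each coset to `1`. -/
noncomputable def augmentation {Λ : Type} (H : Λ → Subgroup G) :
    ((cosetUnion G H) →₀ ℤ) →ₗ[ℤ] ℤ :=
  Finsupp.lsum ℤ (fun _ => (LinearMap.id : ℤ →ₗ[ℤ] ℤ))

/-- The augmentation kernel `Δ = ker (⊕_α ℤ[G/H_α] → ℤ)`, as a `ℤ`-submodule
(it is `G`-invariant, hence a `ℤ[G]`-submodule). -/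
noncomputable def deltaSub {Λ : Type} (H : Λ → Subgroup G) :
    Submodule ℤ ((cosetUnion G H) →₀ ℤ) :=
  LinearMap.ker (augmentation G H)

/-- The weight `w (g [H_α]) = min_{h ∈ H_α} L (g h)` on `⊔_α G/H_α` induced by a
length function `L` on `G`. -/
noncomputable def cosetWeight {Λ : Type} (H : Λ → Subgroup G) (L : G → ℝ)
    (x : cosetUnion G H) : ℝ :=
  sInf {r : ℝ | ∃ g : G, (QuotientGroup.mk g : G ⧸ H x.1) = x.2 ∧ L g = r}

/-- A type `FF^∞` resolution `⋯ → R₁ → R₀ → Δ → 0` of the augmentation kernel `Δ`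
over `ℤ[G]`: each `R_n` is a finitely generated free `ℤ[G]`-module, realized as
`(G × T n) →₀ ℤ` with `T n` finite; the maps are `ℤ`-linear and `G`-equivariant,
and the sequence is exact. -/
structure FFRes {Λ : Type} (H : Λ → Subgroup G) : Type 1 where
  T : ℕ → Type
  finT : ∀ n, Finite (T n)
  d : ∀ n : ℕ, ((G × T (n + 1)) →₀ ℤ) →ₗ[ℤ] ((G × T n) →₀ ℤ)
  π : ((G × T 0) →₀ ℤ) →ₗ[ℤ] ↥(deltaSub G H)
  d_equivariant : ∀ (n : ℕ) (g : G) (x : (G × T (n + 1)) →₀ ℤ),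
    d n (Finsupp.mapDomain (fun p => (g * p.1, p.2)) x)
      = Finsupp.mapDomain (fun p => (g * p.1, p.2)) (d n x)
  π_equivariant : ∀ (g : G) (x : (G × T 0) →₀ ℤ),
    (↑(π (Finsupp.mapDomain (fun p => (g * p.1, p.2)) x)) : (cosetUnion G H) →₀ ℤ)
      = Finsupp.mapDomain (fun q : cosetUnion G H => (⟨q.1, g • q.2⟩ : cosetUnion G H)) ↑(π x)
  π_surjective : Function.Surjective π
  exact_zero : ∀ x : (G × T 0) →₀ ℤ, π x = 0 ↔ ∃ y, d 0 y = x
  exact_succ : ∀ (n : ℕ) (x : (G × T (n + 1)) →₀ ℤ), d n x = 0 ↔ ∃ y, d (n + 1) y = x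

/-- The resolution `R` admits a `ℤ`-linear chain contraction
`{s_n : R_n → R_{n+1}}_{n ≥ -1}` (with `R_{-1} = Δ`), each `s_n` being bounded by an
element of `𝓑` with respect to the weights `w (Σ λᵢ gᵢ sᵢ) = Σ |λᵢ| (L gᵢ + 1)` on
`R_n` and the `ℓ¹`-extension of `w (g[H_α]) = min_{h ∈ H_α} L (g h)` on `Δ`;
i.e. the relative Dehn functions computed from `R` are `𝓑`-bounded. -/
def BddContraction (B : BoundingClass) {Λ : Type} (H : Λ → Subgroup G) (L : G → ℝ)
    (R : FFRes G H) : Prop :=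
  ∃ (sΔ : ↥(deltaSub G H) →ₗ[ℤ] ((G × R.T 0) →₀ ℤ))
    (s : ∀ n : ℕ, ((G × R.T n) →₀ ℤ) →ₗ[ℤ] ((G × R.T (n + 1)) →₀ ℤ)),
    -- the chain contraction identities
    (∀ v : ↥(deltaSub G H), R.π (sΔ v) = v) ∧
    (∀ x : (G × R.T 0) →₀ ℤ, R.d 0 (s 0 x) + sΔ (R.π x) = x) ∧
    (∀ (n : ℕ) (x : (G × R.T (n + 1)) →₀ ℤ),
      R.d (n + 1) (s (n + 1) x) + s n (R.d n x) = x) ∧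
    -- each `s_n` is bounded by an element of `𝓑`
    (∃ φ ∈ B.carrier, ∀ v : ↥(deltaSub G H),
      wnorm (fun p : G × R.T 0 => L p.1 + 1) (sΔ v) ≤ φ (wnorm (cosetWeight G H L) ↑v)) ∧
    (∀ n : ℕ, ∃ φ ∈ B.carrier, ∀ x : (G × R.T n) →₀ ℤ,
      wnorm (fun p : G × R.T (n + 1) => L p.1 + 1) (s n x)
        ≤ φ (wnorm (fun p : G × R.T n => L p.1 + 1) x))

namespace RDF


lemma wnorm_eq_sum_subset {S : Type*} (w : S → ℝ) (x : S →₀ ℤ) {F : Finset S}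
    (h : x.support ⊆ F) : wnorm w x = ∑ s ∈ F, |(x s : ℝ)| * w s :=
  Finsupp.sum_of_support_subset x h _ (fun i _ => by simp)

lemma wnorm_nonneg {S : Type*} {w : S → ℝ} (hw : ∀ s, 0 ≤ w s) (x : S →₀ ℤ) :
    0 ≤ wnorm w x := by
  rw [wnorm_eq_sum_subset w x (Finset.Subset.refl _)]
  exact Finset.sum_nonneg fun s _ => mul_nonneg (abs_nonneg _) (hw s)

lemma wnorm_add_le {S : Type*} {w : S → ℝ} (hw : ∀ s, 0 ≤ w s) (x y : S →₀ ℤ) :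
    wnorm w (x + y) ≤ wnorm w x + wnorm w y := by
  classical
  rw [wnorm_eq_sum_subset w (x+y) Finsupp.support_add,
    wnorm_eq_sum_subset w x Finset.subset_union_left,
    wnorm_eq_sum_subset w y Finset.subset_union_right,
    ← Finset.sum_add_distrib]
  refine Finset.sum_le_sum fun s _ => ?_
  rw [← add_mul]
  refine mul_le_mul_of_nonneg_right ?_ (hw s)
  push_cast [Finsupp.add_apply]
  exact abs_add_le _ _

lemma wnorm_smul {S : Type*} (w : S → ℝ) (m : ℤ) (x : S →₀ ℤ) :
    wnorm w (m • x) = |(m : ℝ)| * wnorm w x := by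
  have hs : (m • x).support ⊆ x.support := Finsupp.support_smul
  rw [wnorm_eq_sum_subset w (m • x) hs, wnorm_eq_sum_subset w x (Finset.Subset.refl _),
    Finset.mul_sum]
  refine Finset.sum_congr rfl fun s _ => ?_
  rw [Finsupp.smul_apply, smul_eq_mul]
  push_cast
  rw [abs_mul, mul_assoc]

lemma wnorm_single {S : Type*} (w : S → ℝ) (a : S) (m : ℤ) :
    wnorm w (Finsupp.single a m) = |(m : ℝ)| * w a := by
  classical
  rw [wnorm, Finsupp.sum_single_index]; simp

lemma wnorm_finsum_le {S ι : Type*} {w : S → ℝ} (hw : ∀ s, 0 ≤ w s)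
    (F : Finset ι) (f : ι → (S →₀ ℤ)) :
    wnorm w (∑ i ∈ F, f i) ≤ ∑ i ∈ F, wnorm w (f i) := by
  classical
  induction F using Finset.induction with
  | empty => simp [wnorm]
  | insert _ _ hni ih =>
    rw [Finset.sum_insert hni, Finset.sum_insert hni]
    exact le_trans (wnorm_add_le hw _ _) (by linarith)

lemma wnorm_mapDomain_le {S S' : Type*} {w' : S' → ℝ} (hw' : ∀ s, 0 ≤ w' s)
    (ι : S → S') (x : S →₀ ℤ) :
    wnorm w' (Finsupp.mapDomain ι x) ≤ ∑ s ∈ x.support, |(x s : ℝ)| * w' (ι s) := by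
  classical
  rw [Finsupp.mapDomain]
  refine le_trans (wnorm_finsum_le hw' _ _) ?_
  refine Finset.sum_le_sum fun s _ => ?_
  rw [wnorm_single]

lemma map_eq_sum_single {S S' : Type*} (F : (S →₀ ℤ) →ₗ[ℤ] (S' →₀ ℤ)) (x : S →₀ ℤ) :
    F x = ∑ a ∈ x.support, (x a) • F (Finsupp.single a 1) := by
  classical
  conv_lhs => rw [← Finsupp.sum_single x]
  rw [Finsupp.sum, map_sum]
  refine Finset.sum_congr rfl fun a _ => ?_
  rw [← map_smul]
  congr 1
  simp [Finsupp.smul_single]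

lemma bound_of_basis {S S' : Type*} {w : S → ℝ} {w' : S' → ℝ}
    (F : (S →₀ ℤ) →ₗ[ℤ] (S' →₀ ℤ)) (hw' : ∀ s, 0 ≤ w' s) (C : ℝ)
    (h : ∀ a, wnorm w' (F (Finsupp.single a 1)) ≤ C * w a) (x : S →₀ ℤ) :
    wnorm w' (F x) ≤ C * wnorm w x := by
  classical
  rw [map_eq_sum_single F x, wnorm_eq_sum_subset w x (Finset.Subset.refl _), Finset.mul_sum]
  refine le_trans (wnorm_finsum_le hw' _ _) (Finset.sum_le_sum fun a _ => ?_)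
  rw [wnorm_smul]
  calc |(x a : ℝ)| * wnorm w' (F (Finsupp.single a 1)) ≤ |(x a : ℝ)| * (C * w a) :=
        mul_le_mul_of_nonneg_left (h a) (abs_nonneg _)
    _ = C * (|(x a : ℝ)| * w a) := by ring

section Equivariant

variable {G : Type} [Group G]

/-- Left translation by `g` on `(G × T) →₀ ℤ`. -/
noncomputable def tr {T : Type} (g : G) : ((G × T) →₀ ℤ) →ₗ[ℤ] ((G × T) →₀ ℤ) :=
  Finsupp.lmapDomain ℤ ℤ (fun p => (g * p.1, p.2))

lemma tr_apply {T : Type} (g : G) (x : (G × T) →₀ ℤ) :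
    tr g x = Finsupp.mapDomain (fun p => (g * p.1, p.2)) x := rfl

lemma tr_single {T : Type} (g a : G) (t : T) (m : ℤ) :
    tr g (Finsupp.single (a, t) m) = Finsupp.single (g * a, t) m := by
  rw [tr_apply, Finsupp.mapDomain_single]

lemma tr_tr {T : Type} (g g' : G) (x : (G × T) →₀ ℤ) :
    tr g (tr g' x) = tr (g * g') x := by
  rw [tr_apply, tr_apply, tr_apply, ← Finsupp.mapDomain_comp]
  congr 1
  funext p
  simp [mul_assoc]

lemma tr_one {T : Type} (x : (G × T) →₀ ℤ) : tr (1 : G) x = x := by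
  rw [tr_apply]
  have : (fun p : G × T => ((1:G) * p.1, p.2)) = id := by funext p; simp
  rw [this, Finsupp.mapDomain_id]

/-- Equivariant extension of `v : S → (G × T) →₀ ℤ`. -/
noncomputable def eqext {S T : Type} (v : S → ((G × T) →₀ ℤ)) :
    ((G × S) →₀ ℤ) →ₗ[ℤ] ((G × T) →₀ ℤ) :=
  Finsupp.lsum ℤ fun p => LinearMap.toSpanSingleton ℤ _ (tr p.1 (v p.2))

lemma eqext_single {S T : Type} (v : S → ((G × T) →₀ ℤ)) (g : G) (t : S) (m : ℤ) :
    eqext v (Finsupp.single (g, t) m) = m • tr g (v t) := by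
  rw [eqext, Finsupp.lsum_single, LinearMap.toSpanSingleton_apply]

lemma eqext_single_one {S T : Type} (v : S → ((G × T) →₀ ℤ)) (t : S) :
    eqext v (Finsupp.single ((1 : G), t) 1) = v t := by
  rw [eqext_single, one_smul, tr_one]

lemma lhom_ext_single {S : Type} {M : Type*} [AddCommGroup M] [Module ℤ M]
    {F F' : ((G × S) →₀ ℤ) →ₗ[ℤ] M}
    (h : ∀ a : G × S, F (Finsupp.single a 1) = F' (Finsupp.single a 1)) : F = F' := by
  refine Finsupp.lhom_ext fun a m => ?_
  have hm : Finsupp.single a m = m • Finsupp.single a (1 : ℤ) := by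
    rw [Finsupp.smul_single, smul_eq_mul, mul_one]
  rw [hm, F.map_smul, F'.map_smul, h]

/-- Extensionality for equivariant maps: it suffices to agree on `(1, t)`. -/
lemma ext_of_equivariant {S : Type} {N : Type*} [AddCommGroup N] [Module ℤ N]
    (ρ : G → N →ₗ[ℤ] N) {F F' : ((G × S) →₀ ℤ) →ₗ[ℤ] N}
    (hF : ∀ (g : G) (x), F (tr g x) = ρ g (F x))
    (hF' : ∀ (g : G) (x), F' (tr g x) = ρ g (F' x))
    (h : ∀ t : S, F (Finsupp.single ((1 : G), t) 1) = F' (Finsupp.single ((1 : G), t) 1)) :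
    F = F' := by
  refine lhom_ext_single fun a => ?_
  obtain ⟨g, t⟩ := a
  have : (Finsupp.single ((g : G), t) (1 : ℤ)) = tr g (Finsupp.single ((1 : G), t) 1) := by
    rw [tr_single, mul_one]
  rw [this, hF, hF', h]

lemma eqext_equivariant {S T : Type} (v : S → ((G × T) →₀ ℤ)) (g : G)
    (x : (G × S) →₀ ℤ) : eqext v (tr g x) = tr g (eqext v x) := by
  have : (eqext v).comp (tr g) = (tr g).comp (eqext v) := by
    refine lhom_ext_single fun a => ?_
    obtain ⟨g', t⟩ := a
    simp only [LinearMap.comp_apply]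
    rw [tr_single, eqext_single, eqext_single, one_smul, one_smul, tr_tr]
  exact DFunLike.congr_fun this x

end Equivariant
section Bounds

variable {G : Type} [Group G] {L : G → ℝ}

lemma weight_pos (hL0 : ∀ g : G, 0 ≤ L g) {T : Type} (p : G × T) :
    0 ≤ L p.1 + 1 := by have := hL0 p.1; linarith

lemma wnorm_tr_le (hL0 : ∀ g : G, 0 ≤ L g) (hLsub : ∀ g h : G, L (g * h) ≤ L g + L h)
    {T : Type} (g : G) (y : (G × T) →₀ ℤ) :
    wnorm (fun p : G × T => L p.1 + 1) (tr g y)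
      ≤ (L g + 1) * wnorm (fun p : G × T => L p.1 + 1) y := by
  rw [tr_apply]
  refine le_trans (wnorm_mapDomain_le (weight_pos hL0) _ _) ?_
  rw [wnorm_eq_sum_subset _ y (Finset.Subset.refl _), Finset.mul_sum]
  refine Finset.sum_le_sum fun a _ => ?_
  have h1 : L ((g * a.1 : G)) + 1 ≤ (L g + 1) * (L a.1 + 1) := by
    have := hLsub g a.1
    have h2 := hL0 g
    have h3 := hL0 a.1
    nlinarith
  calc |(y a : ℝ)| * (L (g * a.1) + 1) ≤ |(y a : ℝ)| * ((L g + 1) * (L a.1 + 1)) :=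
        mul_le_mul_of_nonneg_left h1 (abs_nonneg _)
    _ = (L g + 1) * (|(y a : ℝ)| * (L a.1 + 1)) := by ring

lemma eqext_bound (hL0 : ∀ g : G, 0 ≤ L g) (hLsub : ∀ g h : G, L (g * h) ≤ L g + L h)
    {S T : Type} [Finite S] (v : S → ((G × T) →₀ ℤ)) :
    ∃ C : ℝ, 0 ≤ C ∧ ∀ x : (G × S) →₀ ℤ,
      wnorm (fun p : G × T => L p.1 + 1) (eqext v x)
        ≤ C * wnorm (fun p : G × S => L p.1 + 1) x := by
  classical
  haveI := Fintype.ofFinite S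
  set C : ℝ := ∑ t : S, max 0 (wnorm (fun p : G × T => L p.1 + 1) (v t)) with hC
  have hC0 : 0 ≤ C := Finset.sum_nonneg fun t _ => le_max_left _ _
  have hCt : ∀ t : S, wnorm (fun p : G × T => L p.1 + 1) (v t) ≤ C := by
    intro t
    refine le_trans (le_max_right 0 _) ?_
    exact Finset.single_le_sum (f := fun t => max 0 (wnorm (fun p : G × T => L p.1 + 1) (v t)))
      (fun i _ => le_max_left _ _) (Finset.mem_univ t)
  refine ⟨C, hC0, fun x => ?_⟩
  refine bound_of_basis _ (weight_pos hL0) C (fun a => ?_) x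
  obtain ⟨g, t⟩ := a
  rw [eqext_single, one_smul]
  refine le_trans (wnorm_tr_le hL0 hLsub g (v t)) ?_
  calc (L g + 1) * wnorm (fun p : G × T => L p.1 + 1) (v t) ≤ (L g + 1) * C :=
        mul_le_mul_of_nonneg_left (hCt t) (weight_pos hL0 (g, t))
    _ = C * (L (g, t).1 + 1) := by ring

end Bounds
section Cmap

variable {G : Type} [Group G] {Λ : Type} (H : Λ → Subgroup G)

/-- The `G`-action on `⊕ ℤ[G/H_α]`. -/
noncomputable def trΔ (g : G) : ((cosetUnion G H) →₀ ℤ) →ₗ[ℤ] ((cosetUnion G H) →₀ ℤ) :=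
  Finsupp.lmapDomain ℤ ℤ (fun q : cosetUnion G H => (⟨q.1, g • q.2⟩ : cosetUnion G H))

variable (A B : FFRes G H)

lemma d_tr (n : ℕ) (g : G) (x : (G × A.T (n + 1)) →₀ ℤ) :
    A.d n (tr g x) = tr g (A.d n x) := by
  rw [tr_apply, tr_apply]; exact A.d_equivariant n g x

lemma pi_tr (g : G) (x : (G × A.T 0) →₀ ℤ) :
    (↑(A.π (tr g x)) : (cosetUnion G H) →₀ ℤ) = trΔ H g ↑(A.π x) := by
  rw [tr_apply]; exact A.π_equivariant g x

lemma dd_zero (n : ℕ) (y : (G × A.T (n + 2)) →₀ ℤ) : A.d n (A.d (n + 1) y) = 0 :=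
  (A.exact_succ n _).mpr ⟨y, rfl⟩

lemma pi_d_zero (y : (G × A.T 1) →₀ ℤ) : A.π (A.d 0 y) = 0 :=
  (A.exact_zero _).mpr ⟨y, rfl⟩

/- Comparison chain map `A → B`, defined equivariantly by choice. -/
open Classical in
noncomputable def cmap : ∀ n : ℕ, ((G × A.T n) →₀ ℤ) →ₗ[ℤ] ((G × B.T n) →₀ ℤ)
  | 0 => eqext fun t => (B.π_surjective (A.π (Finsupp.single ((1 : G), t) 1))).choose
  | (n + 1) => eqext fun t =>
      if h : ∃ y, B.d n y = cmap n (A.d n (Finsupp.single ((1 : G), t) 1)) then h.choose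
      else 0

open Classical in
lemma cmap_zero_def : cmap H A B 0
    = eqext fun t => (B.π_surjective (A.π (Finsupp.single ((1 : G), t) 1))).choose := rfl

open Classical in
lemma cmap_succ_def (n : ℕ) : cmap H A B (n + 1)
    = eqext fun t =>
      if h : ∃ y, B.d n y = cmap H A B n (A.d n (Finsupp.single ((1 : G), t) 1)) then h.choose
      else 0 := rfl

lemma cmap_is_eqext (n : ℕ) : ∃ v, cmap H A B n = eqext v := by
  cases n with
  | zero => exact ⟨_, rfl⟩
  | succ n => exact ⟨_, rfl⟩

lemma cmap_tr (n : ℕ) (g : G) (x : (G × A.T n) →₀ ℤ) :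
    cmap H A B n (tr g x) = tr g (cmap H A B n x) := by
  obtain ⟨v, hv⟩ := cmap_is_eqext H A B n
  rw [hv]; exact eqext_equivariant v g x

lemma cmap_pi (x : (G × A.T 0) →₀ ℤ) : B.π (cmap H A B 0 x) = A.π x := by
  have key : (deltaSub G H).subtype.comp (B.π.comp (cmap H A B 0))
      = (deltaSub G H).subtype.comp A.π := by
    refine ext_of_equivariant (trΔ H) ?_ ?_ ?_
    · intro g x
      simp only [LinearMap.comp_apply, Submodule.subtype_apply]
      rw [cmap_tr, pi_tr]
    · intro g x
      simp only [LinearMap.comp_apply, Submodule.subtype_apply]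
      rw [pi_tr]
    · intro t
      simp only [LinearMap.comp_apply, Submodule.subtype_apply]
      have h1 : cmap H A B 0 (Finsupp.single ((1 : G), t) 1)
          = (B.π_surjective (A.π (Finsupp.single ((1 : G), t) 1))).choose := by
        rw [cmap_zero_def, eqext_single_one]
      rw [h1, (B.π_surjective (A.π (Finsupp.single ((1 : G), t) 1))).choose_spec]
  have := LinearMap.congr_fun key x
  simp only [LinearMap.comp_apply, Submodule.subtype_apply] at this
  exact Subtype.coe_injective this

lemma cmap_succ_single (n : ℕ) (t : A.T (n + 1))
    (h : ∃ y, B.d n y = cmap H A B n (A.d n (Finsupp.single ((1 : G), t) 1))) :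
    B.d n (cmap H A B (n + 1) (Finsupp.single ((1 : G), t) 1))
      = cmap H A B n (A.d n (Finsupp.single ((1 : G), t) 1)) := by
  classical
  have h1 : cmap H A B (n + 1) (Finsupp.single ((1 : G), t) 1)
      = if h : ∃ y, B.d n y = cmap H A B n (A.d n (Finsupp.single ((1 : G), t) 1))
        then h.choose else 0 := by
    rw [cmap_succ_def, eqext_single_one]
  rw [h1, dif_pos h]
  exact h.choose_spec

lemma cmap_chain_of_cond (n : ℕ)
    (hcond : ∀ t : A.T (n + 1),
      ∃ y, B.d n y = cmap H A B n (A.d n (Finsupp.single ((1 : G), t) 1))) :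
    ∀ x, B.d n (cmap H A B (n + 1) x) = cmap H A B n (A.d n x) := by
  have key : (B.d n).comp (cmap H A B (n + 1)) = (cmap H A B n).comp (A.d n) := by
    refine ext_of_equivariant (fun g => tr g) ?_ ?_ ?_
    · intro g x
      simp only [LinearMap.comp_apply]
      rw [cmap_tr, d_tr]
    · intro g x
      simp only [LinearMap.comp_apply]
      rw [d_tr, cmap_tr]
    · intro t
      simp only [LinearMap.comp_apply]
      exact cmap_succ_single H A B n t (hcond t)
  exact fun x => LinearMap.congr_fun key x

lemma cmap_cond : ∀ (n : ℕ) (t : A.T (n + 1)),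
    ∃ y, B.d n y = cmap H A B n (A.d n (Finsupp.single ((1 : G), t) 1))
  | 0, t => by
    refine (B.exact_zero _).mp ?_
    rw [cmap_pi, pi_d_zero]
  | (n + 1), t => by
    refine (B.exact_succ n _).mp ?_
    rw [cmap_chain_of_cond H A B n (cmap_cond n), dd_zero, map_zero]

lemma cmap_chain (n : ℕ) (x : (G × A.T (n + 1)) →₀ ℤ) :
    B.d n (cmap H A B (n + 1) x) = cmap H A B n (A.d n x) :=
  cmap_chain_of_cond H A B n (cmap_cond H A B n) x

end Cmap
section Homotopy

variable {G : Type} [Group G] {Λ : Type} (H : Λ → Subgroup G)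
variable (R R₀ : FFRes G H)

/-- The composite `g ∘ f : R → R₀ → R`. -/
noncomputable def gf (n : ℕ) : ((G × R.T n) →₀ ℤ) →ₗ[ℤ] ((G × R.T n) →₀ ℤ) :=
  (cmap H R₀ R n).comp (cmap H R R₀ n)

lemma gf_tr (n : ℕ) (g : G) (x : (G × R.T n) →₀ ℤ) :
    gf H R R₀ n (tr g x) = tr g (gf H R R₀ n x) := by
  simp only [gf, LinearMap.comp_apply, cmap_tr]

lemma gf_pi (x : (G × R.T 0) →₀ ℤ) : R.π (gf H R R₀ 0 x) = R.π x := by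
  simp only [gf, LinearMap.comp_apply, cmap_pi]

lemma gf_chain (n : ℕ) (x : (G × R.T (n + 1)) →₀ ℤ) :
    R.d n (gf H R R₀ (n + 1) x) = gf H R R₀ n (R.d n x) := by
  simp only [gf, LinearMap.comp_apply, cmap_chain]

/- The chain homotopy `id ≃ g ∘ f`, defined equivariantly by choice. -/
open Classical in
noncomputable def hmap : ∀ n : ℕ, ((G × R.T n) →₀ ℤ) →ₗ[ℤ] ((G × R.T (n + 1)) →₀ ℤ)
  | 0 => eqext fun t =>
      if h : ∃ y, R.d 0 y = Finsupp.single ((1 : G), t) 1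
          - gf H R R₀ 0 (Finsupp.single ((1 : G), t) 1) then h.choose
      else 0
  | (n + 1) => eqext fun t =>
      if h : ∃ y, R.d (n + 1) y = Finsupp.single ((1 : G), t) 1
          - gf H R R₀ (n + 1) (Finsupp.single ((1 : G), t) 1)
          - hmap n (R.d n (Finsupp.single ((1 : G), t) 1)) then h.choose
      else 0

open Classical in
lemma hmap_zero_def : hmap H R R₀ 0
    = eqext fun t =>
      if h : ∃ y, R.d 0 y = Finsupp.single ((1 : G), t) 1
          - gf H R R₀ 0 (Finsupp.single ((1 : G), t) 1) then h.choose
      else 0 := rfl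

open Classical in
lemma hmap_succ_def (n : ℕ) : hmap H R R₀ (n + 1)
    = eqext fun t =>
      if h : ∃ y, R.d (n + 1) y = Finsupp.single ((1 : G), t) 1
          - gf H R R₀ (n + 1) (Finsupp.single ((1 : G), t) 1)
          - hmap H R R₀ n (R.d n (Finsupp.single ((1 : G), t) 1)) then h.choose
      else 0 := rfl

lemma hmap_is_eqext (n : ℕ) : ∃ v, hmap H R R₀ n = eqext v := by
  cases n with
  | zero => exact ⟨_, hmap_zero_def H R R₀⟩
  | succ n => exact ⟨_, hmap_succ_def H R R₀ n⟩

lemma hmap_tr (n : ℕ) (g : G) (x : (G × R.T n) →₀ ℤ) :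
    hmap H R R₀ n (tr g x) = tr g (hmap H R R₀ n x) := by
  obtain ⟨v, hv⟩ := hmap_is_eqext H R R₀ n
  rw [hv]; exact eqext_equivariant v g x

lemma hmap_zero_chain (x : (G × R.T 0) →₀ ℤ) :
    R.d 0 (hmap H R R₀ 0 x) = x - gf H R R₀ 0 x := by
  classical
  have key : (R.d 0).comp (hmap H R R₀ 0) = LinearMap.id - gf H R R₀ 0 := by
    refine ext_of_equivariant (fun g => tr g) ?_ ?_ ?_
    · intro g x
      simp only [LinearMap.comp_apply]
      rw [hmap_tr, d_tr]
    · intro g x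
      simp only [LinearMap.sub_apply, LinearMap.id_apply, gf_tr, map_sub]
    · intro t
      simp only [LinearMap.comp_apply, LinearMap.sub_apply, LinearMap.id_apply]
      have hex : ∃ y, R.d 0 y = Finsupp.single ((1 : G), t) 1
          - gf H R R₀ 0 (Finsupp.single ((1 : G), t) 1) := by
        refine (R.exact_zero _).mp ?_
        rw [map_sub, gf_pi, sub_self]
      have h1 : hmap H R R₀ 0 (Finsupp.single ((1 : G), t) 1)
          = if h : ∃ y, R.d 0 y = Finsupp.single ((1 : G), t) 1
              - gf H R R₀ 0 (Finsupp.single ((1 : G), t) 1) then h.choose else 0 := by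
        rw [hmap_zero_def, eqext_single_one]
      rw [h1, dif_pos hex]
      exact hex.choose_spec
  have := LinearMap.congr_fun key x
  simpa using this

lemma hmap_succ_chain : ∀ (n : ℕ) (x : (G × R.T (n + 1)) →₀ ℤ),
    R.d (n + 1) (hmap H R R₀ (n + 1) x)
      = x - gf H R R₀ (n + 1) x - hmap H R R₀ n (R.d n x) := by
  intro n
  induction n with
  | zero =>
    intro x
    classical
    have key : (R.d 1).comp (hmap H R R₀ 1)
        = LinearMap.id - gf H R R₀ 1 - (hmap H R R₀ 0).comp (R.d 0) := by
      refine ext_of_equivariant (fun g => tr g) ?_ ?_ ?_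
      · intro g x
        simp only [LinearMap.comp_apply]
        rw [hmap_tr, d_tr]
      · intro g x
        simp only [LinearMap.sub_apply, LinearMap.id_apply, LinearMap.comp_apply, gf_tr,
          map_sub, d_tr, hmap_tr]
      · intro t
        simp only [LinearMap.comp_apply, LinearMap.sub_apply, LinearMap.id_apply]
        have hex : ∃ y, R.d 1 y = Finsupp.single ((1 : G), t) 1
            - gf H R R₀ 1 (Finsupp.single ((1 : G), t) 1)
            - hmap H R R₀ 0 (R.d 0 (Finsupp.single ((1 : G), t) 1)) := by
          refine (R.exact_succ 0 _).mp ?_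
          rw [map_sub, map_sub, gf_chain, hmap_zero_chain]
          abel
        have h1 : hmap H R R₀ 1 (Finsupp.single ((1 : G), t) 1)
            = if h : ∃ y, R.d 1 y = Finsupp.single ((1 : G), t) 1
                - gf H R R₀ 1 (Finsupp.single ((1 : G), t) 1)
                - hmap H R R₀ 0 (R.d 0 (Finsupp.single ((1 : G), t) 1)) then h.choose
              else 0 := by
          rw [hmap_succ_def, eqext_single_one]
        rw [h1, dif_pos hex]
        exact hex.choose_spec
    have := LinearMap.congr_fun key x
    simpa using this
  | succ n ih =>
    intro x
    classical
    have key : (R.d (n + 2)).comp (hmap H R R₀ (n + 2))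
        = LinearMap.id - gf H R R₀ (n + 2) - (hmap H R R₀ (n + 1)).comp (R.d (n + 1)) := by
      refine ext_of_equivariant (fun g => tr g) ?_ ?_ ?_
      · intro g x
        simp only [LinearMap.comp_apply]
        rw [hmap_tr, d_tr]
      · intro g x
        simp only [LinearMap.sub_apply, LinearMap.id_apply, LinearMap.comp_apply, gf_tr,
          map_sub, d_tr, hmap_tr]
      · intro t
        simp only [LinearMap.comp_apply, LinearMap.sub_apply, LinearMap.id_apply]
        have hex : ∃ y, R.d (n + 2) y = Finsupp.single ((1 : G), t) 1
            - gf H R R₀ (n + 2) (Finsupp.single ((1 : G), t) 1)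
            - hmap H R R₀ (n + 1) (R.d (n + 1) (Finsupp.single ((1 : G), t) 1)) := by
          refine (R.exact_succ (n + 1) _).mp ?_
          rw [map_sub, map_sub, gf_chain, ih, dd_zero, map_zero]
          abel
        have h1 : hmap H R R₀ (n + 2) (Finsupp.single ((1 : G), t) 1)
            = if h : ∃ y, R.d (n + 2) y = Finsupp.single ((1 : G), t) 1
                - gf H R R₀ (n + 2) (Finsupp.single ((1 : G), t) 1)
                - hmap H R R₀ (n + 1) (R.d (n + 1) (Finsupp.single ((1 : G), t) 1))
              then h.choose else 0 := by
          rw [hmap_succ_def, eqext_single_one]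
        rw [h1, dif_pos hex]
        exact hex.choose_spec
    have := LinearMap.congr_fun key x
    simpa using this

end Homotopy
section FinalBounds

variable {G : Type} [Group G] {Λ : Type} (H : Λ → Subgroup G)

lemma cosetWeight_nonneg {L : G → ℝ} (hL0 : ∀ g : G, 0 ≤ L g) (q : cosetUnion G H) :
    0 ≤ cosetWeight G H L q := by
  refine Real.sInf_nonneg ?_
  rintro r ⟨g, -, rfl⟩
  exact hL0 g

lemma cmap_bound {L : G → ℝ} (hL0 : ∀ g : G, 0 ≤ L g)
    (hLsub : ∀ g h : G, L (g * h) ≤ L g + L h) (A B : FFRes G H) (n : ℕ) :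
    ∃ C : ℝ, 0 ≤ C ∧ ∀ x : (G × A.T n) →₀ ℤ,
      wnorm (fun p : G × B.T n => L p.1 + 1) (cmap H A B n x)
        ≤ C * wnorm (fun p : G × A.T n => L p.1 + 1) x := by
  haveI := A.finT n
  obtain ⟨v, hv⟩ := cmap_is_eqext H A B n
  rw [hv]
  exact eqext_bound hL0 hLsub v

lemma hmap_bound {L : G → ℝ} (hL0 : ∀ g : G, 0 ≤ L g)
    (hLsub : ∀ g h : G, L (g * h) ≤ L g + L h) (R R₀ : FFRes G H) (n : ℕ) :
    ∃ C : ℝ, 0 ≤ C ∧ ∀ x : (G × R.T n) →₀ ℤ,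
      wnorm (fun p : G × R.T (n + 1) => L p.1 + 1) (hmap H R R₀ n x)
        ≤ C * wnorm (fun p : G × R.T n => L p.1 + 1) x := by
  haveI := R.finT n
  obtain ⟨v, hv⟩ := hmap_is_eqext H R R₀ n
  rw [hv]
  exact eqext_bound hL0 hLsub v

end FinalBounds
end RDF


/-- Let `ℒ ⪯ 𝓑`, let `G` be a finitely generated group with word-length
function `L` and `𝓗 = {H_α}_{α ∈ Λ}` a finite family of subgroups such that the
augmentation kernel `Δ` admits a type `FF^∞` resolution over `ℤ[G]`.  If some type
`FF^∞` resolution of `Δ` admits a `𝓑`-bounded `ℤ`-linear contraction (i.e. the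
relative Dehn functions of `G` with respect to `𝓗` are `𝓑`-bounded for that
resolution), then every type `FF^∞` resolution of `Δ` admits one. -/
theorem relative_dehn_functions_independent_of_resolution
    (B : BoundingClass) (hLB : ClassLE LinClass B.carrier)
    (hGfg : Group.FG G)
    (L : G → ℝ)
    (hL_nonneg : ∀ g : G, 0 ≤ L g)
    (hL_sub : ∀ g h : G, L (g * h) ≤ L g + L h)
    (hL_inv : ∀ g : G, L g⁻¹ = L g)
    {Λ : Type} [Finite Λ] (H : Λ → Subgroup G)
    (R₀ : FFRes G H) (hR₀ : BddContraction G B H L R₀) :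
    ∀ R : FFRes G H, BddContraction G B H L R := by
  classical
  intro R
  obtain ⟨sΔ, s, hπs, h0, hsucc, ⟨φΔ, hφΔB, hφΔ⟩, hs⟩ := hR₀
  -- comparison maps
  set f : ∀ n : ℕ, ((G × R.T n) →₀ ℤ) →ₗ[ℤ] ((G × R₀.T n) →₀ ℤ) := RDF.cmap H R R₀ with hf
  set gm : ∀ n : ℕ, ((G × R₀.T n) →₀ ℤ) →ₗ[ℤ] ((G × R.T n) →₀ ℤ) := RDF.cmap H R₀ R with hgm
  -- the new contraction
  refine ⟨(gm 0).comp sΔ,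
    fun n => ((gm (n + 1)).comp ((s n).comp (f n))) + RDF.hmap H R R₀ n, ?_, ?_, ?_, ?_, ?_⟩
  · -- π ∘ sΔ' = id
    intro v
    simp only [LinearMap.comp_apply, hgm]
    rw [RDF.cmap_pi, hπs]
  · -- degree-0 identity
    intro x
    simp only [LinearMap.add_apply, LinearMap.comp_apply, map_add, hgm, hf]
    rw [RDF.cmap_chain H R₀ R 0, RDF.hmap_zero_chain H R R₀ x]
    have hπ : R.π x = R₀.π (RDF.cmap H R R₀ 0 x) := (RDF.cmap_pi H R R₀ x).symm
    rw [hπ]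
    have hcomb : RDF.cmap H R₀ R 0 (R₀.d 0 (s 0 (RDF.cmap H R R₀ 0 x)))
        + RDF.cmap H R₀ R 0 (sΔ (R₀.π (RDF.cmap H R R₀ 0 x))) = RDF.gf H R R₀ 0 x := by
      rw [← map_add, h0]
      rfl
    rw [← hcomb]
    abel
  · -- higher identities
    intro n x
    simp only [LinearMap.add_apply, LinearMap.comp_apply, map_add, hgm, hf]
    rw [RDF.cmap_chain H R₀ R (n + 1), RDF.hmap_succ_chain H R R₀ n x]
    have hfd : RDF.cmap H R R₀ n (R.d n x)
        = R₀.d n (RDF.cmap H R R₀ (n + 1) x) := (RDF.cmap_chain H R R₀ n x).symm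
    rw [hfd]
    have hcomb : RDF.cmap H R₀ R (n + 1) (R₀.d (n + 1) (s (n + 1) (RDF.cmap H R R₀ (n + 1) x)))
        + RDF.cmap H R₀ R (n + 1) (s n (R₀.d n (RDF.cmap H R R₀ (n + 1) x)))
        = RDF.gf H R R₀ (n + 1) x := by
      rw [← map_add, hsucc]
      rfl
    rw [← hcomb]
    abel
  · -- bound for sΔ'
    obtain ⟨Cg, hCg0, hCg⟩ := RDF.cmap_bound H hL_nonneg hL_sub R₀ R 0
    obtain ⟨qg, hqg⟩ := exists_rat_gt Cg
    have hqg0 : (0 : ℚ) ≤ qg := by exact_mod_cast le_of_lt (lt_of_le_of_lt hCg0 hqg)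
    obtain ⟨Φ, hΦB, hΦ⟩ := B.lin_comb 1 ![φΔ] ![qg] (fun i => by fin_cases i <;> exact hφΔB)
      (fun i => by fin_cases i <;> exact hqg0)
    refine ⟨Φ, hΦB, fun v => ?_⟩
    have hwc : 0 ≤ wnorm (cosetWeight G H L) ↑v :=
      RDF.wnorm_nonneg (RDF.cosetWeight_nonneg H hL_nonneg) _
    have hφpos : 0 < φΔ (wnorm (cosetWeight G H L) ↑v) := B.pos φΔ hφΔB _ hwc
    have h1 : wnorm (fun p : G × R.T 0 => L p.1 + 1) ((gm 0).comp sΔ v)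
        ≤ Cg * φΔ (wnorm (cosetWeight G H L) ↑v) := by
      refine le_trans (hCg (sΔ v)) ?_
      exact mul_le_mul_of_nonneg_left (hφΔ v) hCg0
    calc wnorm (fun p : G × R.T 0 => L p.1 + 1) ((gm 0).comp sΔ v)
        ≤ Cg * φΔ (wnorm (cosetWeight G H L) ↑v) := h1
      _ ≤ (qg : ℝ) * φΔ (wnorm (cosetWeight G H L) ↑v) :=
          mul_le_mul_of_nonneg_right (le_of_lt hqg) (le_of_lt hφpos)
      _ ≤ Φ (wnorm (cosetWeight G H L) ↑v) := by
          have h2 := hΦ _ hwc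
          simp only [Fin.sum_univ_one, Matrix.cons_val_zero] at h2
          exact le_of_lt h2
  · -- bounds for s' n
    intro n
    obtain ⟨φ, hφB, hφ⟩ := hs n
    obtain ⟨Cg, hCg0, hCg⟩ := RDF.cmap_bound H hL_nonneg hL_sub R₀ R (n + 1)
    obtain ⟨Cf, hCf0, hCf⟩ := RDF.cmap_bound H hL_nonneg hL_sub R R₀ n
    obtain ⟨Ch, hCh0, hCh⟩ := RDF.hmap_bound H hL_nonneg hL_sub R R₀ n
    obtain ⟨qg, hqg⟩ := exists_rat_gt Cg
    obtain ⟨qf, hqf⟩ := exists_rat_gt Cf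
    obtain ⟨qh, hqh⟩ := exists_rat_gt Ch
    have hqg0 : (0 : ℚ) ≤ qg := by exact_mod_cast le_of_lt (lt_of_le_of_lt hCg0 hqg)
    have hqf0 : (0 : ℚ) ≤ qf := by exact_mod_cast le_of_lt (lt_of_le_of_lt hCf0 hqf)
    have hqh0 : (0 : ℚ) ≤ qh := by exact_mod_cast le_of_lt (lt_of_le_of_lt hCh0 hqh)
    obtain ⟨ψ, hψB, hψ⟩ := B.comp_lin φ hφB qf 0 hqf0 le_rfl
    obtain ⟨ℓ, hℓB, hℓ⟩ := hLB (fun x => (qh : ℝ) * x + ((0 : ℚ) : ℝ))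
      ⟨qh, 0, hqh0, le_rfl, rfl⟩
    obtain ⟨Φ, hΦB, hΦ⟩ := B.lin_comb 2 ![ψ, ℓ] ![qg, 1]
      (fun i => by fin_cases i <;> assumption)
      (fun i => by fin_cases i <;> [exact hqg0; exact zero_le_one])
    refine ⟨Φ, hΦB, fun x => ?_⟩
    set wx := wnorm (fun p : G × R.T n => L p.1 + 1) x with hwx
    have hwx0 : 0 ≤ wx := RDF.wnorm_nonneg (RDF.weight_pos hL_nonneg) x
    set wfx := wnorm (fun p : G × R₀.T n => L p.1 + 1) (f n x) with hwfx
    have hwfx0 : 0 ≤ wfx := RDF.wnorm_nonneg (RDF.weight_pos hL_nonneg) _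
    -- main estimate chain
    have hsplit : wnorm (fun p : G × R.T (n + 1) => L p.1 + 1)
          ((((gm (n + 1)).comp ((s n).comp (f n))) + RDF.hmap H R R₀ n) x)
        ≤ wnorm (fun p : G × R.T (n + 1) => L p.1 + 1) ((gm (n + 1)) (s n (f n x)))
          + wnorm (fun p : G × R.T (n + 1) => L p.1 + 1) (RDF.hmap H R R₀ n x) := by
      simp only [LinearMap.add_apply, LinearMap.comp_apply]
      exact RDF.wnorm_add_le (RDF.weight_pos hL_nonneg) _ _
    have hterm1 : wnorm (fun p : G × R.T (n + 1) => L p.1 + 1) ((gm (n + 1)) (s n (f n x)))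
        ≤ Cg * φ wfx :=
      le_trans (hCg _) (mul_le_mul_of_nonneg_left (hφ (f n x)) hCg0)
    have hmono : φ wfx ≤ φ ((qf : ℝ) * wx + ((0 : ℚ) : ℝ)) := by
      refine B.mono φ hφB _ _ hwfx0 ?_
      push_cast
      rw [add_zero]
      exact le_trans (hCf x) (mul_le_mul_of_nonneg_right (le_of_lt hqf) hwx0)
    have hψ' : φ wfx ≤ ψ wx := le_trans hmono (le_of_lt (hψ wx hwx0))
    have hφpos : 0 ≤ φ wfx := le_of_lt (B.pos φ hφB _ hwfx0)
    have hterm1' : Cg * φ wfx ≤ (qg : ℝ) * ψ wx :=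
      mul_le_mul (le_of_lt hqg) hψ' hφpos (by exact_mod_cast hqg0)
    have hterm2 : wnorm (fun p : G × R.T (n + 1) => L p.1 + 1) (RDF.hmap H R R₀ n x)
        ≤ ℓ wx := by
      refine le_trans (hCh x) (le_trans ?_ (hℓ wx hwx0))
      push_cast
      rw [add_zero]
      exact mul_le_mul_of_nonneg_right (le_of_lt hqh) hwx0
    have hΦ' := hΦ wx hwx0
    simp only [Fin.sum_univ_two, Matrix.cons_val_zero, Matrix.cons_val_one, Matrix.head_cons,
      Rat.cast_one, one_mul] at hΦ'
    calc wnorm (fun p : G × R.T (n + 1) => L p.1 + 1)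
          ((((gm (n + 1)).comp ((s n).comp (f n))) + RDF.hmap H R R₀ n) x)
        ≤ wnorm (fun p : G × R.T (n + 1) => L p.1 + 1) ((gm (n + 1)) (s n (f n x)))
          + wnorm (fun p : G × R.T (n + 1) => L p.1 + 1) (RDF.hmap H R R₀ n x) := hsplit
      _ ≤ (qg : ℝ) * ψ wx + ℓ wx := add_le_add (le_trans hterm1 hterm1') hterm2
      _ ≤ Φ wx := le_of_lt hΦ'
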